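/- arXiv:2302.00985 — 5 statements merged into one kernel-verified Lean document; each statement's English description precedes it below -/
import Mathlib

section
/- Fix an instance of unrelated-machine scheduling with speed predictions, a schedule produced by the Maximum Density algorithm, and a constant κ ≥ 1. The dual assignment ā_j = w_j C_j, b̄_{it} = (1/κ)∑_{t'≥t} β_{it'}, c̄_{jt} = (1/κ)∑_{t'≥t} γ_{jt'} is nonnegative and satisfies, for every machine i, job j, and time t ≥ r_j: (ā_j s_{ij})/p_j − μ₂κ·b̄_{it} − μ₂κ·c̄_{jt} ≤ w_j (s_{ij}·t)/p_j. -/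
open Finset

/-- The progress of job `j` at time `t`: `q_{jt} = ∑_i s_{ij} y_{ijt}`. -/
def progress {m n : ℕ} (s : Fin m → Fin n → ℝ) (y : Fin m → Fin n → ℕ → ℝ)
    (j : Fin n) (t : ℕ) : ℝ := ∑ i, s i j * y i j t

/-- `C j` is the least time `t` such that `∑_{t'=r_j}^{t} q_{jt'} ≥ p_j`. -/
def CompletesAt {m n : ℕ} (p : Fin n → ℝ) (r : Fin n → ℕ) (s : Fin m → Fin n → ℝ)
    (y : Fin m → Fin n → ℕ → ℝ) (C : Fin n → ℕ) : Prop :=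
  ∀ j, (p j ≤ ∑ t' ∈ Finset.Icc (r j) (C j), progress s y j t') ∧
    (∀ t, t < C j → ¬ (p j ≤ ∑ t' ∈ Finset.Icc (r j) t, progress s y j t'))

/-- A set of machine-job pairs is a matching. -/
def IsMatching {m n : ℕ} (M : Finset (Fin m × Fin n)) : Prop :=
  (∀ e ∈ M, ∀ e' ∈ M, e.1 = e'.1 → e = e') ∧
  (∀ e ∈ M, ∀ e' ∈ M, e.2 = e'.2 → e = e')

lemma sum_ite_mem_fst' {m n : ℕ} (M : Finset (Fin m × Fin n)) (i : Fin m)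
    (f : Fin m × Fin n → ℝ) :
    (∑ j, if (i, j) ∈ M then f (i, j) else 0)
      = ∑ e ∈ M.filter (fun e => e.1 = i), f e := by
  classical
  rw [← Finset.sum_filter]
  have himg : M.filter (fun e => e.1 = i)
      = (Finset.univ.filter (fun j => (i, j) ∈ M)).image (fun j => (i, j)) := by
    ext e
    simp only [Finset.mem_filter, Finset.mem_image, Finset.mem_univ, true_and]
    constructor
    · rintro ⟨hM, h1⟩
      exact ⟨e.2, by rw [← h1]; simpa using hM, by rw [← h1]⟩
    · rintro ⟨j, hj, rfl⟩
      exact ⟨hj, rfl⟩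
  rw [himg, Finset.sum_image (by intro a _ b _ h; simpa using h)]

lemma sum_ite_mem_snd' {m n : ℕ} (M : Finset (Fin m × Fin n)) (j : Fin n)
    (f : Fin m × Fin n → ℝ) :
    (∑ i, if (i, j) ∈ M then f (i, j) else 0)
      = ∑ e ∈ M.filter (fun e => e.2 = j), f e := by
  classical
  rw [← Finset.sum_filter]
  have himg : M.filter (fun e => e.2 = j)
      = (Finset.univ.filter (fun i => (i, j) ∈ M)).image (fun i => (i, j)) := by
    ext e
    simp only [Finset.mem_filter, Finset.mem_image, Finset.mem_univ, true_and]
    constructor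
    · rintro ⟨hM, h1⟩
      exact ⟨e.1, by rw [← h1]; simpa using hM, by rw [← h1]⟩
    · rintro ⟨i, hi, rfl⟩
      exact ⟨hi, rfl⟩
  rw [himg, Finset.sum_image (by intro a _ b _ h; simpa using h)]

/-- For the Maximum Density algorithm with speed predictions and any `κ ≥ 1`, the dual
assignment `ā, b̄, c̄` is nonnegative and feasible for the dual LP with `α = μ₂κ`. -/
theorem maxDensity_dual_feasible
    (m n : ℕ)
    (p w : Fin n → ℝ) (r : Fin n → ℕ) (s shat : Fin m → Fin n → ℝ)
    (hp : ∀ j, 0 < p j) (hw : ∀ j, 0 ≤ w j)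
    (hs : ∀ i j, 0 < s i j) (hshat : ∀ i j, 0 < shat i j)
    (μ₁ μ₂ : ℝ)
    (hμ₁ub : ∀ i j, shat i j / s i j ≤ μ₁) (hμ₁max : ∃ i j, shat i j / s i j = μ₁)
    (hμ₂ub : ∀ i j, s i j / shat i j ≤ μ₂) (hμ₂max : ∃ i j, s i j / shat i j = μ₂)
    (κ : ℝ) (hκ : 1 ≤ κ)
    -- the algorithm's schedule: at every time `t`, a maximum-weight matching between
    -- machines and alive jobs w.r.t. predicted densities, run at rate 1
    (M : ℕ → Finset (Fin m × Fin n)) (C : Fin n → ℕ) (y : Fin m → Fin n → ℕ → ℝ)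
    (hmatch : ∀ t, IsMatching (M t))
    (halive : ∀ t, ∀ e ∈ M t, r e.2 ≤ t ∧ t ≤ C e.2)
    (hmaxweight : ∀ t, ∀ M' : Finset (Fin m × Fin n), IsMatching M' →
      (∀ e ∈ M', r e.2 ≤ t ∧ t ≤ C e.2) →
      (∑ e ∈ M', w e.2 * shat e.1 e.2 / p e.2) ≤ ∑ e ∈ M t, w e.2 * shat e.1 e.2 / p e.2)
    (hy : ∀ i j t, y i j t = if (i, j) ∈ M t then 1 else 0)
    (hC : CompletesAt p r s y C)
    -- the values β, γ and the dual assignment ā, b̄, c̄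
    (β : Fin m → ℕ → ℝ)
    (hβ : ∀ i t, β i t = ∑ j, if (i, j) ∈ M t then w j * shat i j / p j else 0)
    (γ : Fin n → ℕ → ℝ)
    (hγ : ∀ j t, γ j t = ∑ i, if (i, j) ∈ M t then w j * shat i j / p j else 0)
    (abar : Fin n → ℝ) (habar : ∀ j, abar j = w j * (C j : ℝ))
    (bbar : Fin m → ℕ → ℝ)
    (hbbar : ∀ i t, bbar i t = (1 / κ) * ∑' t' : ℕ, if t ≤ t' then β i t' else 0)
    (cbar : Fin n → ℕ → ℝ)
    (hcbar : ∀ j t, cbar j t = (1 / κ) * ∑' t' : ℕ, if t ≤ t' then γ j t' else 0) :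
    ((∀ j, 0 ≤ abar j) ∧ (∀ i t, 0 ≤ bbar i t) ∧ (∀ j t, 0 ≤ cbar j t)) ∧
      (∀ i j (t : ℕ), r j ≤ t →
        abar j * s i j / p j - μ₂ * κ * bbar i t - μ₂ * κ * cbar j t ≤
          w j * (s i j * (t : ℝ)) / p j) := by
  classical
  have hκ0 : (0:ℝ) < κ := lt_of_lt_of_le zero_lt_one hκ
  set wgt : Fin m × Fin n → ℝ := fun e => w e.2 * shat e.1 e.2 / p e.2 with hwgtdef
  have hwgt0 : ∀ e, 0 ≤ wgt e := fun e =>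
    div_nonneg (mul_nonneg (hw e.2) (hshat e.1 e.2).le) (hp e.2).le
  have hβ0 : ∀ i t, 0 ≤ β i t := by
    intro i t
    rw [hβ]
    refine Finset.sum_nonneg fun j _ => ?_
    split_ifs
    · exact hwgt0 (i, j)
    · exact le_rfl
  have hγ0 : ∀ j t, 0 ≤ γ j t := by
    intro j t
    rw [hγ]
    refine Finset.sum_nonneg fun i _ => ?_
    split_ifs
    · exact hwgt0 (i, j)
    · exact le_rfl
  -- the matching is empty beyond N := sup C
  set N : ℕ := Finset.univ.sup C with hNdef
  have hMempty : ∀ t, N < t → M t = ∅ := by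
    intro t ht
    rw [Finset.eq_empty_iff_forall_notMem]
    intro e he
    have h2 := (halive t e he).2
    have h3 : C e.2 ≤ N := Finset.le_sup (Finset.mem_univ e.2)
    omega
  have hsummβ : ∀ i t, Summable (fun t' : ℕ => if t ≤ t' then β i t' else 0) := by
    intro i t
    apply summable_of_ne_finset_zero (s := Finset.range (N + 1))
    intro t' ht'
    have hgt : N < t' := by
      simp only [Finset.mem_range] at ht'; omega
    have hb : β i t' = 0 := by
      rw [hβ]
      apply Finset.sum_eq_zero
      intro j _
      rw [hMempty t' hgt]
      simp
    rw [hb, ite_self]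
  have hsummγ : ∀ j t, Summable (fun t' : ℕ => if t ≤ t' then γ j t' else 0) := by
    intro j t
    apply summable_of_ne_finset_zero (s := Finset.range (N + 1))
    intro t' ht'
    have hgt : N < t' := by
      simp only [Finset.mem_range] at ht'; omega
    have hg : γ j t' = 0 := by
      rw [hγ]
      apply Finset.sum_eq_zero
      intro i _
      rw [hMempty t' hgt]
      simp
    rw [hg, ite_self]
  have hbbar0 : ∀ i t, 0 ≤ bbar i t := by
    intro i t
    rw [hbbar]
    refine mul_nonneg (by positivity) (tsum_nonneg fun t' => ?_)
    split_ifs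
    · exact hβ0 i t'
    · exact le_rfl
  have hcbar0 : ∀ j t, 0 ≤ cbar j t := by
    intro j t
    rw [hcbar]
    refine mul_nonneg (by positivity) (tsum_nonneg fun t' => ?_)
    split_ifs
    · exact hγ0 j t'
    · exact le_rfl
  refine ⟨⟨fun j => by rw [habar]; exact mul_nonneg (hw j) (Nat.cast_nonneg _),
      hbbar0, hcbar0⟩, ?_⟩
  intro i j t hrt
  have hμ₂pos : 0 < μ₂ :=
    lt_of_lt_of_le (div_pos (hs i j) (hshat i j)) (hμ₂ub i j)
  -- key exchange inequality
  have key : ∀ t', r j ≤ t' → t' ≤ C j → wgt (i, j) ≤ β i t' + γ j t' := by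
    intro t' hr' hC'
    set F := (M t').filter (fun e => e.1 ≠ i ∧ e.2 ≠ j) with hFdef
    have hijF : (i, j) ∉ F := by simp [hFdef]
    set M' := insert (i, j) F with hM'def
    have hM'match : IsMatching M' := by
      constructor
      · intro e he e' he' h1
        rcases Finset.mem_insert.mp he with rfl | he
        · rcases Finset.mem_insert.mp he' with rfl | he'
          · rfl
          · exact absurd h1.symm (Finset.mem_filter.mp he').2.1
        · rcases Finset.mem_insert.mp he' with rfl | he'
          · exact absurd h1 (Finset.mem_filter.mp he).2.1
          · exact (hmatch t').1 e (Finset.mem_of_mem_filter _ he) e'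
              (Finset.mem_of_mem_filter _ he') h1
      · intro e he e' he' h2
        rcases Finset.mem_insert.mp he with rfl | he
        · rcases Finset.mem_insert.mp he' with rfl | he'
          · rfl
          · exact absurd h2.symm (Finset.mem_filter.mp he').2.2
        · rcases Finset.mem_insert.mp he' with rfl | he'
          · exact absurd h2 (Finset.mem_filter.mp he).2.2
          · exact (hmatch t').2 e (Finset.mem_of_mem_filter _ he) e'
              (Finset.mem_of_mem_filter _ he') h2
    have hM'alive : ∀ e ∈ M', r e.2 ≤ t' ∧ t' ≤ C e.2 := by
      intro e he
      rcases Finset.mem_insert.mp he with rfl | he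
      · exact ⟨hr', hC'⟩
      · exact halive t' e (Finset.mem_of_mem_filter _ he)
    have hle := hmaxweight t' M' hM'match hM'alive
    have hsumM' : (∑ e ∈ M', wgt e) = wgt (i, j) + ∑ e ∈ F, wgt e :=
      Finset.sum_insert hijF
    have hsplit : (∑ e ∈ M t', wgt e)
        = (∑ e ∈ F, wgt e) + ∑ e ∈ (M t').filter (fun e => ¬ (e.1 ≠ i ∧ e.2 ≠ j)), wgt e :=
      (Finset.sum_filter_add_sum_filter_not _ _ _).symm
    -- the removed edges have total weight at most β i t' + γ j t'
    set A := (M t').filter (fun e => e.1 = i) with hAdef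
    set B := (M t').filter (fun e => e.2 = j) with hBdef
    have hsubset : (M t').filter (fun e => ¬ (e.1 ≠ i ∧ e.2 ≠ j)) ⊆ A ∪ B := by
      intro e he
      rw [Finset.mem_filter] at he
      rw [Finset.mem_union, hAdef, hBdef, Finset.mem_filter, Finset.mem_filter]
      push_neg at he
      rcases Classical.em (e.1 = i) with h | h
      · exact Or.inl ⟨he.1, h⟩
      · exact Or.inr ⟨he.1, he.2 h⟩
    have hR : (∑ e ∈ (M t').filter (fun e => ¬ (e.1 ≠ i ∧ e.2 ≠ j)), wgt e)
        ≤ β i t' + γ j t' := by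
      have h1 : (∑ e ∈ (M t').filter (fun e => ¬ (e.1 ≠ i ∧ e.2 ≠ j)), wgt e)
          ≤ ∑ e ∈ A ∪ B, wgt e :=
        Finset.sum_le_sum_of_subset_of_nonneg hsubset (fun e _ _ => hwgt0 e)
      have h2 : (∑ e ∈ A ∪ B, wgt e) ≤ (∑ e ∈ A, wgt e) + ∑ e ∈ B, wgt e := by
        have h3 := Finset.sum_union_inter (s₁ := A) (s₂ := B) (f := wgt)
        have h4 : 0 ≤ ∑ e ∈ A ∩ B, wgt e := Finset.sum_nonneg fun e _ => hwgt0 e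
        linarith
      have hA : β i t' = ∑ e ∈ A, wgt e := by
        rw [hβ, hAdef, ← sum_ite_mem_fst' (M t') i wgt]
      have hB : γ j t' = ∑ e ∈ B, wgt e := by
        rw [hγ, hBdef, ← sum_ite_mem_snd' (M t') j wgt]
      rw [hA, hB]
      exact le_trans h1 h2
    have hfin : wgt (i, j) + (∑ e ∈ F, wgt e)
        ≤ (∑ e ∈ F, wgt e) + ∑ e ∈ (M t').filter (fun e => ¬ (e.1 ≠ i ∧ e.2 ≠ j)), wgt e := by
      rw [← hsumM', ← hsplit]; exact hle
    linarith
  -- put things together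
  set δ : ℝ := wgt (i, j) with hδdef
  have hδ0 : 0 ≤ δ := hwgt0 (i, j)
  set Tb : ℝ := ∑' t' : ℕ, if t ≤ t' then β i t' else 0 with hTbdef
  set Tc : ℝ := ∑' t' : ℕ, if t ≤ t' then γ j t' else 0 with hTcdef
  have hTb0 : 0 ≤ Tb := by
    refine tsum_nonneg fun t' => ?_
    split_ifs
    · exact hβ0 i t'
    · exact le_rfl
  have hTc0 : 0 ≤ Tc := by
    refine tsum_nonneg fun t' => ?_
    split_ifs
    · exact hγ0 j t'
    · exact le_rfl
  have hbb : μ₂ * κ * bbar i t = μ₂ * Tb := by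
    rw [hbbar, ← hTbdef]; field_simp
  have hcc : μ₂ * κ * cbar j t = μ₂ * Tc := by
    rw [hcbar, ← hTcdef]; field_simp
  have habar' : abar j * s i j / p j = (w j * s i j / p j) * (C j : ℝ) := by
    rw [habar]; ring
  have hrhs : w j * (s i j * (t : ℝ)) / p j = (w j * s i j / p j) * (t : ℝ) := by
    ring
  set q : ℝ := w j * s i j / p j with hqdef
  have hq0 : 0 ≤ q := div_nonneg (mul_nonneg (hw j) (hs i j).le) (hp j).le
  rw [habar', hrhs, hbb, hcc]
  rcases le_total (C j) t with hct | hct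
  · have h1 : q * (C j : ℝ) ≤ q * (t : ℝ) :=
      mul_le_mul_of_nonneg_left (Nat.cast_le.mpr hct) hq0
    nlinarith [mul_nonneg hμ₂pos.le hTb0, mul_nonneg hμ₂pos.le hTc0]
  · -- t ≤ C j
    have hcard : (Finset.Icc t (C j)).card = C j + 1 - t := Nat.card_Icc t (C j)
    have hsumβ : (∑ t' ∈ Finset.Icc t (C j), β i t') ≤ Tb := by
      have hst := Summable.sum_le_tsum (Finset.Icc t (C j))
        (fun t' _ => by split_ifs with h; exacts [hβ0 i t', le_rfl]) (hsummβ i t)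
      calc (∑ t' ∈ Finset.Icc t (C j), β i t')
          = ∑ t' ∈ Finset.Icc t (C j), (if t ≤ t' then β i t' else 0) := by
            refine Finset.sum_congr rfl fun t' ht' => ?_
            rw [if_pos (Finset.mem_Icc.mp ht').1]
        _ ≤ Tb := hst
    have hsumγ : (∑ t' ∈ Finset.Icc t (C j), γ j t') ≤ Tc := by
      have hst := Summable.sum_le_tsum (Finset.Icc t (C j))
        (fun t' _ => by split_ifs with h; exacts [hγ0 j t', le_rfl]) (hsummγ j t)
      calc (∑ t' ∈ Finset.Icc t (C j), γ j t')
          = ∑ t' ∈ Finset.Icc t (C j), (if t ≤ t' then γ j t' else 0) := by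
            refine Finset.sum_congr rfl fun t' ht' => ?_
            rw [if_pos (Finset.mem_Icc.mp ht').1]
        _ ≤ Tc := hst
    have hkey : ((Finset.Icc t (C j)).card : ℝ) * δ
        ≤ (∑ t' ∈ Finset.Icc t (C j), β i t') + ∑ t' ∈ Finset.Icc t (C j), γ j t' := by
      rw [← Finset.sum_add_distrib]
      have hns := Finset.card_nsmul_le_sum (Finset.Icc t (C j))
        (fun t' => β i t' + γ j t') δ
        (fun t' ht' => by
          have h := Finset.mem_Icc.mp ht'
          exact key t' (le_trans hrt h.1) h.2)
      simpa [nsmul_eq_mul] using hns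
    have hcard' : (C j : ℝ) - (t : ℝ) ≤ ((Finset.Icc t (C j)).card : ℝ) := by
      rw [hcard]
      push_cast [Nat.cast_sub (by omega : t ≤ C j + 1)]
      linarith
    have hqδ : q ≤ μ₂ * δ := by
      have hs' : s i j ≤ μ₂ * shat i j := by
        have h5 := hμ₂ub i j
        rw [div_le_iff₀ (hshat i j)] at h5
        exact h5
      have hnum : w j * s i j ≤ w j * (μ₂ * shat i j) :=
        mul_le_mul_of_nonneg_left hs' (hw j)
      have heq : μ₂ * δ = w j * (μ₂ * shat i j) / p j := by
        rw [hδdef, hwgtdef]; ring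
      rw [hqdef, heq, div_le_div_iff₀ (hp j) (hp j)]
      nlinarith [mul_le_mul_of_nonneg_right hnum (hp j).le]
    have hct' : (t : ℝ) ≤ (C j : ℝ) := Nat.cast_le.mpr hct
    have h1 : q * ((C j : ℝ) - t) ≤ (μ₂ * δ) * ((C j : ℝ) - t) :=
      mul_le_mul_of_nonneg_right hqδ (by linarith)
    have h2 : (μ₂ * δ) * ((C j : ℝ) - t) ≤ (μ₂ * δ) * ((Finset.Icc t (C j)).card : ℝ) :=
      mul_le_mul_of_nonneg_left hcard' (mul_nonneg hμ₂pos.le hδ0)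
    have h3 : μ₂ * (((Finset.Icc t (C j)).card : ℝ) * δ) ≤ μ₂ * (Tb + Tc) := by
      refine mul_le_mul_of_nonneg_left ?_ hμ₂pos.le
      calc ((Finset.Icc t (C j)).card : ℝ) * δ
          ≤ (∑ t' ∈ Finset.Icc t (C j), β i t') + ∑ t' ∈ Finset.Icc t (C j), γ j t' := hkey
        _ ≤ Tb + Tc := add_le_add hsumβ hsumγ
    nlinarith
end

section
/- Let J(t) be a finite set of jobs with weights w_j > 0, let ŝ_{ij} > 0 be speeds, and let y_{ijt} ≥ 0 be rates with ∑_{i'} ŝ_{i'j} y_{i'jt} > 0 for each j ∈ J(t). Suppose nonnegative multipliers η_{it} (for each machine i) and θ_{jt} (for each j ∈ J(t)) satisfy the KKT conditions: (1) ŝ_{ij} w_j / (∑_{i'} ŝ_{i'j} y_{i'jt}) ≤ θ_{jt} + η_{it} for all i and j ∈ J(t); (2) y_{ijt}·(ŝ_{ij} w_j / (∑_{i'} ŝ_{i'j} y_{i'jt}) − θ_{jt} − η_{it}) = 0 for all i and j ∈ J(t); (3) θ_{jt}·(∑_i y_{ijt} − 1) = 0 for all j ∈ J(t); (4) η_{it}·(∑_{j∈J(t)}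 y_{ijt} − 1) = 0 for all i. Then ∑_i η_{it} + ∑_{j∈J(t)} θ_{jt} = ∑_{j∈J(t)} w_j. -/
open Finset

/-- The KKT conditions of the Proportional Fairness convex program imply
`∑_i η_i + ∑_j θ_j = ∑_j w_j`. -/
theorem pf_kkt_multiplier_sum
    (m n : ℕ)
    (w : Fin n → ℝ) (hw : ∀ j, 0 < w j)
    (shat : Fin m → Fin n → ℝ) (hshat : ∀ i j, 0 < shat i j)
    (y : Fin m → Fin n → ℝ) (hy : ∀ i j, 0 ≤ y i j)
    (hden : ∀ j, 0 < ∑ i', shat i' j * y i' j)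
    (η : Fin m → ℝ) (θ : Fin n → ℝ)
    (hη : ∀ i, 0 ≤ η i) (hθ : ∀ j, 0 ≤ θ j)
    (kkt1 : ∀ i j, shat i j * w j / (∑ i', shat i' j * y i' j) ≤ θ j + η i)
    (kkt2 : ∀ i j, y i j * (shat i j * w j / (∑ i', shat i' j * y i' j) - (θ j + η i)) = 0)
    (kkt3 : ∀ j, θ j * ((∑ i, y i j) - 1) = 0)
    (kkt4 : ∀ i, η i * ((∑ j, y i j) - 1) = 0) :
    (∑ i, η i) + (∑ j, θ j) = ∑ j, w j := by
  have h2 : ∀ i j, y i j * (shat i j * w j / (∑ i', shat i' j * y i' j))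
      = y i j * (θ j + η i) := by
    intro i j
    have := kkt2 i j
    rw [mul_sub, sub_eq_zero] at this
    exact this
  have hsum : ∀ j, ∑ i, y i j * (θ j + η i) = w j := by
    intro j
    have hne : (∑ i', shat i' j * y i' j) ≠ 0 := (hden j).ne'
    have : ∑ i, y i j * (θ j + η i)
        = ∑ i, (shat i j * y i j) * (w j / (∑ i', shat i' j * y i' j)) := by
      refine Finset.sum_congr rfl fun i _ => ?_
      rw [← h2 i j]
      field_simp
    rw [this, ← Finset.sum_mul, mul_div_assoc', mul_comm, mul_div_assoc,
      div_self hne, mul_one]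
  have hθsum : ∀ j, ∑ i, y i j * θ j = θ j := by
    intro j
    rw [← Finset.sum_mul]
    have := kkt3 j
    nlinarith [kkt3 j]
  have hηsum : ∀ i, ∑ j, y i j * η i = η i := by
    intro i
    rw [← Finset.sum_mul]
    nlinarith [kkt4 i]
  calc (∑ i, η i) + (∑ j, θ j)
      = (∑ i, ∑ j, y i j * η i) + (∑ j, ∑ i, y i j * θ j) := by
        simp [hθsum, hηsum]
    _ = (∑ j, ∑ i, y i j * η i) + (∑ j, ∑ i, y i j * θ j) := by
        rw [Finset.sum_comm]
    _ = ∑ j, ∑ i, y i j * (θ j + η i) := by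
        rw [← Finset.sum_add_distrib]
        refine Finset.sum_congr rfl fun j _ => ?_
        rw [← Finset.sum_add_distrib]
        refine Finset.sum_congr rfl fun i _ => ?_
        ring
    _ = ∑ j, w j := Finset.sum_congr rfl fun j _ => hsum j
end

section
/- Fix an instance of unrelated-machine scheduling with speed predictions in which all weights w_j are positive integers, a schedule produced by the Proportional Fairness algorithm, and a constant 0 < λ < 1. Define ā_j = ∑_{t'=0}^{C_j} w_j·1[q_{jt'}/p_j ≤ ζ_{t'}]. Then ∑_{j∈J} ā_j ≥ λ · ∑_{j∈J} w_j C_j. -/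
open Finset

lemma countP_repl {p : ℝ → Prop} [DecidablePred p] (n : ℕ) (a : ℝ) :
    Multiset.countP p (Multiset.replicate n a) = if p a then n else 0 := by
  induction n with
  | zero => simp
  | succ k ih => rw [Multiset.replicate_succ, Multiset.countP_cons, ih]; split <;> simp

lemma sorted_count (M : Multiset ℝ) (k : ℕ) (hk : k < Multiset.card M) :
    k + 1 ≤ Multiset.countP (fun x => x ≤ (Multiset.sort M (· ≤ ·)).getD k 0) M := by
  classical
  set L := Multiset.sort M (· ≤ ·) with hL
  have hlen : L.length = Multiset.card M := Multiset.length_sort _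
  have hkL : k < L.length := hlen ▸ hk
  have hζ : L.getD k 0 = L.get ⟨k, hkL⟩ := by
    rw [List.getD_eq_getElem _ _ hkL]; simp
  have hsorted : L.Pairwise (· ≤ ·) := Multiset.pairwise_sort _ _
  have hM : (L : Multiset ℝ) = M := Multiset.sort_eq _ _
  rw [← hM, Multiset.coe_countP]
  have heq : L.countP (fun x => decide (x ≤ L.getD k 0))
      = (L.take (k+1)).countP (fun x => decide (x ≤ L.getD k 0))
        + (L.drop (k+1)).countP (fun x => decide (x ≤ L.getD k 0)) := by
    rw [← List.countP_append, List.take_append_drop]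
  rw [heq]
  have htake : (L.take (k+1)).countP (fun x => decide (x ≤ L.getD k 0)) = k + 1 := by
    have hall : ∀ a ∈ L.take (k+1), a ≤ L.getD k 0 := by
      intro a ha
      rw [List.mem_take_iff_getElem] at ha
      obtain ⟨i, hi, rfl⟩ := ha
      rw [hζ]
      have hik : i ≤ k := by omega
      rcases Nat.lt_or_eq_of_le hik with h | h
      · exact hsorted.rel_get_of_lt (a := ⟨i, lt_min_iff.mp hi |>.2⟩) (b := ⟨k, hkL⟩) h
      · subst h; exact le_of_eq rfl
    have := List.countP_eq_length (p := fun x => decide (x ≤ L.getD k 0)) (l := L.take (k+1))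
    rw [this.mpr (fun a ha => by simpa using hall a ha), List.length_take]
    omega
  omega

lemma ms_card_sum {ι : Type*} (U : Finset ι) (g : ι → Multiset ℝ) :
    Multiset.card (∑ j ∈ U, g j) = ∑ j ∈ U, Multiset.card (g j) := by
  classical
  induction U using Finset.induction with
  | empty => simp
  | insert a s h ih => simp [Finset.sum_insert h, ih]

lemma ms_countP_sum {ι : Type*} (p : ℝ → Prop) [DecidablePred p] (U : Finset ι)
    (g : ι → Multiset ℝ) :
    Multiset.countP p (∑ j ∈ U, g j) = ∑ j ∈ U, Multiset.countP p (g j) := by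
  classical
  induction U using Finset.induction with
  | empty => simp
  | insert a s h ih => simp [Finset.sum_insert h, Multiset.countP_add, ih]

lemma swap_sum {n T : ℕ} (C : Fin n → ℕ) (hT : ∀ j, C j < T) (f : Fin n → ℕ → ℝ) :
    ∑ j, ∑ t ∈ Finset.range (C j + 1), f j t
      = ∑ t ∈ Finset.range T, ∑ j ∈ univ.filter (fun j => t ≤ C j), f j t := by
  classical
  have h1 : ∀ j : Fin n, ∑ t ∈ Finset.range (C j + 1), f j t
      = ∑ t ∈ Finset.range T, (if t ≤ C j then f j t else 0) := by
    intro j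
    rw [← Finset.sum_filter]
    congr 1
    ext t
    simp only [Finset.mem_filter, Finset.mem_range]
    have := hT j
    omega
  simp_rw [h1]
  rw [Finset.sum_comm]
  exact Finset.sum_congr rfl fun t _ => (Finset.sum_filter _ _).symm

/-- For Proportional Fairness with integral weights, the duals
`ā_j = ∑_{t'=0}^{C_j} w_j·1[q_{jt'}/p_j ≤ ζ_{t'}]` satisfy `∑_j ā_j ≥ λ · ALG`. -/
theorem pf_abar_lower_bound
    (m n : ℕ)
    (p : Fin n → ℝ) (w : Fin n → ℕ) (r : Fin n → ℕ) (s shat : Fin m → Fin n → ℝ)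
    (hp : ∀ j, 0 < p j) (hw : ∀ j, 0 < w j)
    (hs : ∀ i j, 0 < s i j) (hshat : ∀ i j, 0 < shat i j)
    (lam : ℝ) (hlam0 : 0 < lam) (hlam1 : lam < 1)
    -- the algorithm's schedule: at every time `t`, the rates on the alive jobs
    -- `J(t) = {j : r j ≤ t ≤ C j}` optimize the proportional-fairness convex program
    (y : Fin m → Fin n → ℕ → ℝ) (C : Fin n → ℕ)
    (hdead : ∀ i j t, ¬ (r j ≤ t ∧ t ≤ C j) → y i j t = 0)
    (hynn : ∀ i j t, 0 ≤ y i j t)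
    (hymach : ∀ i t, (∑ j ∈ univ.filter (fun j => r j ≤ t ∧ t ≤ C j), y i j t) ≤ 1)
    (hyjob : ∀ j t, (∑ i, y i j t) ≤ 1)
    (hopt : ∀ (t : ℕ) (z : Fin m → Fin n → ℝ), (∀ i j, 0 ≤ z i j) →
      (∀ i, (∑ j ∈ univ.filter (fun j => r j ≤ t ∧ t ≤ C j), z i j) ≤ 1) →
      (∀ j ∈ univ.filter (fun j => r j ≤ t ∧ t ≤ C j), (∑ i, z i j) ≤ 1) →
      (∑ j ∈ univ.filter (fun j => r j ≤ t ∧ t ≤ C j),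
          (w j : ℝ) * Real.log (∑ i, shat i j * z i j)) ≤
        ∑ j ∈ univ.filter (fun j => r j ≤ t ∧ t ≤ C j),
          (w j : ℝ) * Real.log (∑ i, shat i j * y i j t))
    (hC : CompletesAt p r s y C)
    -- unfinished jobs `U_t`, their total weight `W_t`, and the quantile value `ζ_t`
    (U : ℕ → Finset (Fin n)) (hU : ∀ t, U t = univ.filter (fun j => t ≤ C j))
    (W : ℕ → ℕ) (hW : ∀ t, W t = ∑ j ∈ U t, w j)
    (ζ : ℕ → ℝ)
    (hζ : ∀ t, ζ t = (Multiset.sort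
        (∑ j ∈ U t, Multiset.replicate (w j) (progress s y j t / p j)) (· ≤ ·)).getD
      (Nat.floor (lam * (W t : ℝ))) 0)
    -- the duals ā
    (abar : Fin n → ℝ)
    (habar : ∀ j, abar j = ∑ t' ∈ Finset.range (C j + 1),
      if progress s y j t' / p j ≤ ζ t' then (w j : ℝ) else 0) :
    lam * (∑ j, (w j : ℝ) * (C j : ℝ)) ≤ ∑ j, abar j := by
    classical
  set T := (Finset.univ.sup C) + 1 with hTdef
  have hT : ∀ j, C j < T := fun j => Nat.lt_succ_of_le (Finset.le_sup (mem_univ j))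
  set f : Fin n → ℕ → ℝ :=
    fun j t => if progress s y j t / p j ≤ ζ t then (w j : ℝ) else 0 with hf
  -- per-time key bound
  have key : ∀ t, lam * (W t : ℝ) ≤ ∑ j ∈ U t, f j t := by
    intro t
    by_cases hUe : (U t) = ∅
    · simp [hUe, hW t]
    · have hne : (U t).Nonempty := Finset.nonempty_iff_ne_empty.mpr hUe
      have hWpos : 0 < W t := by
        rw [hW t]; exact Finset.sum_pos (fun j _ => hw j) hne
      set M : Multiset ℝ :=
        ∑ j ∈ U t, Multiset.replicate (w j) (progress s y j t / p j) with hM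
      have hcard : Multiset.card M = W t := by
        rw [hM, ms_card_sum, hW t]; simp
      set k := Nat.floor (lam * (W t : ℝ)) with hk
      have hkW : k < W t := by
        rw [hk, Nat.floor_lt (by positivity)]
        exact mul_lt_of_lt_one_left (by exact_mod_cast hWpos) hlam1
      have hcnt : k + 1 ≤ Multiset.countP (fun x => x ≤ ζ t) M := by
        have := sorted_count M k (by rw [hcard]; exact hkW)
        rwa [← hζ t] at this
      have hcnt2 : Multiset.countP (fun x => x ≤ ζ t) M
          = ∑ j ∈ U t, (if progress s y j t / p j ≤ ζ t then w j else 0) := by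
        rw [hM, ms_countP_sum]
        exact Finset.sum_congr rfl fun j _ => countP_repl _ _
      have hle : lam * (W t : ℝ) ≤ (k : ℝ) + 1 :=
        le_of_lt (Nat.lt_floor_add_one _)
      have hcast : ((∑ j ∈ U t, (if progress s y j t / p j ≤ ζ t then w j else 0) : ℕ) : ℝ)
          = ∑ j ∈ U t, f j t := by
        push_cast <;> rfl
      calc lam * (W t : ℝ) ≤ (k : ℝ) + 1 := hle
        _ ≤ ((∑ j ∈ U t, (if progress s y j t / p j ≤ ζ t then w j else 0) : ℕ) : ℝ) := by
            exact_mod_cast (hcnt.trans_eq hcnt2)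
        _ = ∑ j ∈ U t, f j t := hcast
  have habs : ∑ j, abar j = ∑ t ∈ Finset.range T, ∑ j ∈ U t, f j t := by
    have := swap_sum C hT f
    simp_rw [hU]
    rw [← this]
    exact Finset.sum_congr rfl fun j _ => habar j
  have hWsum : ∑ j, (w j : ℝ) * (C j : ℝ) ≤ ∑ t ∈ Finset.range T, (W t : ℝ) := by
    have hsw := swap_sum C hT (fun j _ => (w j : ℝ))
    have : ∑ t ∈ Finset.range T, (W t : ℝ)
        = ∑ j, ∑ t ∈ Finset.range (C j + 1), (w j : ℝ) := by
      rw [hsw]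
      refine Finset.sum_congr rfl fun t _ => ?_
      rw [hW t, hU t]; push_cast; rfl
    rw [this]
    refine Finset.sum_le_sum fun j _ => ?_
    rw [Finset.sum_const, Finset.card_range, nsmul_eq_mul]
    push_cast
    have : (0:ℝ) ≤ (w j : ℝ) := by positivity
    nlinarith [this]
  calc lam * (∑ j, (w j : ℝ) * (C j : ℝ))
      ≤ lam * ∑ t ∈ Finset.range T, (W t : ℝ) := by
        exact mul_le_mul_of_nonneg_left hWsum hlam0.le
    _ = ∑ t ∈ Finset.range T, lam * (W t : ℝ) := Finset.mul_sum _ _ _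
    _ ≤ ∑ t ∈ Finset.range T, ∑ j ∈ U t, f j t := Finset.sum_le_sum fun t _ => key t
    _ = ∑ j, abar j := habs.symm
end

section
/- Fix an instance on related machines (s_{ij} = s_i) that are speed-ordered (s_1 ≥ … ≥ s_m), the schedule produced by Algorithm Maximum Density for speed-ordered machines, and a constant κ ≥ 1. Then the dual assignment ā_j = w_j C_j, b̄_{it} = (1/κ)∑_{t'≥t} β_{it'}, c̄_{jt} = (1/κ)∑_{t'≥t} γ_{jt'} is nonnegative and satisfies, for every machine i, job j, and time t ≥ r_j: (ā_j s_i)/p_j − κ·b̄_{it} − κ·c̄_{jt} ≤ w_j (s_i·t)/p_j. -/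
open Finset

/-- Feasibility of the rates of a schedule. -/
def Feasible {m n : ℕ} (r : Fin n → ℕ) (y : Fin m → Fin n → ℕ → ℝ) : Prop :=
  (∀ i j t, 0 ≤ y i j t ∧ y i j t ≤ 1) ∧
  (∀ i j t, t < r j → y i j t = 0) ∧
  (∀ j t, (∑ i, y i j t) ≤ 1) ∧
  (∀ i t, (∑ j, y i j t) ≤ 1)

/-- For the Maximum Density algorithm on speed-ordered related machines and any `κ ≥ 1`,
the dual assignment `ā, b̄, c̄` is nonnegative and feasible for the dual LP with `α = κ`. -/
theorem maxDensity_speed_ordered_dual_feasible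
    (m n : ℕ)
    (p w : Fin n → ℝ) (r : Fin n → ℕ) (s : Fin m → ℝ)
    (hp : ∀ j, 0 < p j) (hw : ∀ j, 0 ≤ w j)
    (hs : ∀ i, 0 < s i)
    -- speed-ordered related machines: `s 1 ≥ s 2 ≥ … ≥ s m`
    (hso : ∀ i i' : Fin m, i ≤ i' → s i' ≤ s i)
    -- the algorithm's schedule: at every time `t`, the alive jobs
    -- `J(t) = {j : r j ≤ t ≤ C j}` are ranked by non-increasing density `w j / p j`,
    -- and the `k`-th job is processed with rate 1 on machine `k` (for `k ≤ min{m,|J(t)|}`)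
    (C : Fin n → ℕ) (rank : ℕ → Fin n → ℕ)
    (A : ℕ → Finset (Fin n)) (hA : ∀ t, A t = univ.filter (fun j => r j ≤ t ∧ t ≤ C j))
    (hrank_lt : ∀ t j, j ∈ A t → rank t j < (A t).card)
    (hrank_inj : ∀ t j j', j ∈ A t → j' ∈ A t → rank t j = rank t j' → j = j')
    (hrank_mono : ∀ t j j', j ∈ A t → j' ∈ A t → rank t j ≤ rank t j' →
      w j' / p j' ≤ w j / p j)
    (y : Fin m → Fin n → ℕ → ℝ)
    (hy : ∀ i j t, y i j t = if j ∈ A t ∧ (i : ℕ) = rank t j then 1 else 0)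
    (hC : CompletesAt p r (fun i _ => s i) y C)
    (κ : ℝ) (hκ : 1 ≤ κ)
    -- the values β, γ (from the matching `M_t` induced by the ranks)
    (β : Fin m → ℕ → ℝ)
    (hβ : ∀ i t, β i t = ∑ j, if j ∈ A t ∧ (i : ℕ) = rank t j then w j * s i / p j else 0)
    (γ : Fin n → ℕ → ℝ)
    (hγ : ∀ j t, γ j t = ∑ i : Fin m, if j ∈ A t ∧ (i : ℕ) = rank t j then w j * s i / p j else 0)
    -- the dual assignment ā, b̄, c̄
    (abar : Fin n → ℝ) (habar : ∀ j, abar j = w j * (C j : ℝ))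
    (bbar : Fin m → ℕ → ℝ)
    (hbbar : ∀ i t, bbar i t = (1 / κ) * ∑' t' : ℕ, if t ≤ t' then β i t' else 0)
    (cbar : Fin n → ℕ → ℝ)
    (hcbar : ∀ j t, cbar j t = (1 / κ) * ∑' t' : ℕ, if t ≤ t' then γ j t' else 0) :
    ((∀ j, 0 ≤ abar j) ∧ (∀ i t, 0 ≤ bbar i t) ∧ (∀ j t, 0 ≤ cbar j t)) ∧
      (∀ i j (t : ℕ), r j ≤ t →
        abar j * s i / p j - κ * bbar i t - κ * cbar j t ≤
          w j * (s i * (t : ℝ)) / p j) := by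
  have hκ0 : (0:ℝ) < κ := lt_of_lt_of_le one_pos hκ
  have hκne : κ ≠ 0 := ne_of_gt hκ0
  have hβnn : ∀ i t, 0 ≤ β i t := by
    intro i t
    rw [hβ]
    refine Finset.sum_nonneg fun j _ => ?_
    have := (hp j).le
    have := hw j
    have := (hs i).le
    split
    · positivity
    · exact le_refl 0
  have hγnn : ∀ j t, 0 ≤ γ j t := by
    intro j t
    rw [hγ]
    refine Finset.sum_nonneg fun i _ => ?_
    have := (hp j).le
    have := hw j
    have := (hs i).le
    split
    · positivity
    · exact le_refl 0
  set N : ℕ := Finset.univ.sup C with hN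
  have hCN : ∀ j, C j ≤ N := fun j => Finset.le_sup (Finset.mem_univ j)
  have hAempty : ∀ t, N < t → A t = ∅ := by
    intro t ht
    rw [hA]
    refine Finset.filter_eq_empty_iff.mpr fun j _ => ?_
    rintro ⟨-, h2⟩
    exact absurd (h2.trans (hCN j)) (not_le.mpr ht)
  have hβ0 : ∀ i t, N < t → β i t = 0 := by
    intro i t ht
    rw [hβ]
    refine Finset.sum_eq_zero fun j _ => ?_
    rw [if_neg]
    rintro ⟨hj, -⟩
    simp [hAempty t ht] at hj
  have hγ0 : ∀ j t, N < t → γ j t = 0 := by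
    intro j t ht
    rw [hγ]
    refine Finset.sum_eq_zero fun i _ => ?_
    rw [if_neg]
    rintro ⟨hj, -⟩
    simp [hAempty t ht] at hj
  have hbsum : ∀ i t, (∑' t' : ℕ, if t ≤ t' then β i t' else 0)
      = ∑ t' ∈ Finset.Icc t N, β i t' := by
    intro i t
    rw [tsum_eq_sum (s := Finset.Icc t N) (by
      intro b hb
      rw [Finset.mem_Icc] at hb
      push_neg at hb
      by_cases hbt : t ≤ b
      · rw [if_pos hbt]
        exact hβ0 i b (hb hbt)
      · rw [if_neg hbt])]
    refine Finset.sum_congr rfl fun t' ht' => ?_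
    rw [Finset.mem_Icc] at ht'
    rw [if_pos ht'.1]
  have hcsum : ∀ j t, (∑' t' : ℕ, if t ≤ t' then γ j t' else 0)
      = ∑ t' ∈ Finset.Icc t N, γ j t' := by
    intro j t
    rw [tsum_eq_sum (s := Finset.Icc t N) (by
      intro b hb
      rw [Finset.mem_Icc] at hb
      push_neg at hb
      by_cases hbt : t ≤ b
      · rw [if_pos hbt]
        exact hγ0 j b (hb hbt)
      · rw [if_neg hbt])]
    refine Finset.sum_congr rfl fun t' ht' => ?_
    rw [Finset.mem_Icc] at ht'
    rw [if_pos ht'.1]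
  have hkb : ∀ i t, κ * bbar i t = ∑ t' ∈ Finset.Icc t N, β i t' := by
    intro i t
    rw [hbbar, hbsum]
    field_simp
  have hkc : ∀ j t, κ * cbar j t = ∑ t' ∈ Finset.Icc t N, γ j t' := by
    intro j t
    rw [hcbar, hcsum]
    field_simp
  constructor
  · refine ⟨fun j => ?_, fun i t => ?_, fun j t => ?_⟩
    · rw [habar]
      exact mul_nonneg (hw j) (Nat.cast_nonneg _)
    · rw [hbbar]
      refine mul_nonneg (by positivity) (tsum_nonneg fun t' => ?_)
      split
      · exact hβnn i t'
      · exact le_refl 0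
    · rw [hcbar]
      refine mul_nonneg (by positivity) (tsum_nonneg fun t' => ?_)
      split
      · exact hγnn j t'
      · exact le_refl 0
  · intro i j t ht
    have hBnn : (0:ℝ) ≤ ∑ t' ∈ Finset.Icc t N, β i t' :=
      Finset.sum_nonneg fun t' _ => hβnn i t'
    have hCnn : (0:ℝ) ≤ ∑ t' ∈ Finset.Icc t N, γ j t' :=
      Finset.sum_nonneg fun t' _ => hγnn j t'
    have hdnn : (0:ℝ) ≤ w j * s i / p j := by
      have := (hp j).le; have := hw j; have := (hs i).le; positivity
    rw [habar, sub_le_iff_le_add, sub_le_iff_le_add, hkb, hkc]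
    by_cases hct : C j ≤ t
    · have h1 : w j * (C j : ℝ) * s i / p j ≤ w j * (s i * (t:ℝ)) / p j := by
        have hc : (C j : ℝ) ≤ (t:ℝ) := Nat.cast_le.mpr hct
        have hmul : w j * (C j : ℝ) * s i ≤ w j * (s i * (t:ℝ)) := by
          linarith [mul_le_mul_of_nonneg_left hc (mul_nonneg (hw j) (hs i).le)]
        exact div_le_div_of_nonneg_right hmul (hp j).le
      linarith
    · push_neg at hct
      -- every time step in [t, C j - 1] contributes at least d := w j * s i / p j
      have hkey : ∀ t' ∈ Finset.Icc t (C j - 1), w j * s i / p j ≤ β i t' + γ j t' := by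
        intro t' ht'
        rw [Finset.mem_Icc] at ht'
        have hjA : j ∈ A t' := by
          rw [hA]
          refine Finset.mem_filter.mpr ⟨Finset.mem_univ j, ht.trans ht'.1, ?_⟩
          omega
        by_cases hri : rank t' j ≤ (i : ℕ)
        · -- j itself is matched on a machine at least as fast as i
          have hlt : rank t' j < m := lt_of_le_of_lt hri i.isLt
          set i' : Fin m := ⟨rank t' j, hlt⟩ with hi'
          have hterm : w j * s i' / p j ≤ γ j t' := by
            rw [hγ]
            refine Finset.single_le_sum (f := fun i'' : Fin m =>
                if j ∈ A t' ∧ (i'' : ℕ) = rank t' j then w j * s i'' / p j else 0)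
              (fun i'' _ => ?_) (Finset.mem_univ i') |>.trans_eq' ?_
            · have := (hp j).le; have := hw j; have := (hs i'').le
              split
              · positivity
              · exact le_refl 0
            · rw [if_pos ⟨hjA, rfl⟩]
          have hsle : s i ≤ s i' := hso i' i hri
          have : w j * s i / p j ≤ w j * s i' / p j := by
            apply div_le_div_of_nonneg_right _ (hp j).le
            exact mul_le_mul_of_nonneg_left hsle (hw j)
          linarith [hβnn i t']
        · -- machine i is matched to a job j' of higher density
          push_neg at hri
          have hicard : (i : ℕ) ∈ Finset.range (A t').card :=
            Finset.mem_range.mpr (hri.trans (hrank_lt t' j hjA))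
          obtain ⟨j', hj'A, hj'⟩ := Finset.surj_on_of_inj_on_of_card_le
            (s := A t') (t := Finset.range (A t').card)
            (fun a _ => rank t' a)
            (fun a ha => Finset.mem_range.mpr (hrank_lt t' a ha))
            (fun a₁ a₂ ha₁ ha₂ h => hrank_inj t' a₁ a₂ ha₁ ha₂ h)
            (by rw [Finset.card_range]) (i : ℕ) hicard
          -- hj' : (i : ℕ) = rank t' j'
          have hdens : w j / p j ≤ w j' / p j' := by
            refine hrank_mono t' j' j hj'A hjA ?_
            omega
          have hterm : w j' * s i / p j' ≤ β i t' := by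
            rw [hβ]
            refine Finset.single_le_sum (f := fun a : Fin n =>
                if a ∈ A t' ∧ (i : ℕ) = rank t' a then w a * s i / p a else 0)
              (fun a _ => ?_) (Finset.mem_univ j') |>.trans_eq' ?_
            · have := (hp a).le; have := hw a; have := (hs i).le
              split
              · positivity
              · exact le_refl 0
            · rw [if_pos ⟨hj'A, hj'⟩]
          have : w j * s i / p j ≤ w j' * s i / p j' := by
            have h1 : w j / p j * s i ≤ w j' / p j' * s i :=
              mul_le_mul_of_nonneg_right hdens (hs i).le
            calc w j * s i / p j = w j / p j * s i := by ring
              _ ≤ w j' / p j' * s i := h1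
              _ = w j' * s i / p j' := by ring
          linarith [hγnn j t']
      have hsub : Finset.Icc t (C j - 1) ⊆ Finset.Icc t N := by
        intro t' ht'
        rw [Finset.mem_Icc] at ht' ⊢
        have := hCN j
        omega
      have hsum1 : ((C j - t : ℕ) : ℝ) * (w j * s i / p j)
          ≤ ∑ t' ∈ Finset.Icc t (C j - 1), (β i t' + γ j t') := by
        have hcard : (Finset.Icc t (C j - 1)).card = C j - t := by
          rw [Nat.card_Icc]
          omega
        calc ((C j - t : ℕ) : ℝ) * (w j * s i / p j)
            = ∑ _t' ∈ Finset.Icc t (C j - 1), (w j * s i / p j) := by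
              rw [Finset.sum_const, hcard, nsmul_eq_mul]
          _ ≤ _ := Finset.sum_le_sum hkey
      have hsum2 : ∑ t' ∈ Finset.Icc t (C j - 1), (β i t' + γ j t')
          ≤ (∑ t' ∈ Finset.Icc t N, β i t') + ∑ t' ∈ Finset.Icc t N, γ j t' := by
        rw [← Finset.sum_add_distrib]
        refine Finset.sum_le_sum_of_subset_of_nonneg hsub fun t' _ _ => ?_
        exact add_nonneg (hβnn i t') (hγnn j t')
      have hcast : ((C j - t : ℕ) : ℝ) = (C j : ℝ) - (t : ℝ) := by
        have : t ≤ C j := hct.le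
        push_cast [Nat.cast_sub this]
        ring
      rw [hcast] at hsum1
      have hfin : w j * (C j:ℝ) * s i / p j - w j * (s i * (t:ℝ)) / p j
          = ((C j:ℝ) - (t:ℝ)) * (w j * s i / p j) := by
        ring
      nlinarith [hsum1.trans hsum2]
end

section
/- Fix an instance on speed-ordered unrelated machines (s_{1j} ≥ … ≥ s_{mj} for every j) with unit weights, the schedule produced by Algorithm Round Robin for speed-ordered machines, and any constant κ ≥ 1. Then the dual assignment ā_j = ∑_{t'=0}^{C_j} 1[q_{jt'}/p_j ≤ ζ_{t'}], b̄_{it} = (1/κ)∑_{t'≥t} β_{it'}·ζ_{t'}, c̄_{jt} = (1/κ)∑_{t'≥t} γ_{jt'}·ζ_{t'} is nonnegative and satisfies, for every machine i, job j, and time t ≥ r_j: (ā_j s_{ij})/p_j − κ·b̄_{it} − κ·c̄_{jt} ≤ (s_{ij}·t)/p_j. -/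
open Finset

lemma card_filter_fin_lt (m k : ℕ) (hk : k ≤ m) :
    (Finset.univ.filter (fun i : Fin m => (i : ℕ) < k)).card = k := by
  have he : Finset.univ.filter (fun i : Fin m => (i : ℕ) < k)
      = (Finset.range k).attachFin
        (fun x hx => lt_of_lt_of_le (Finset.mem_range.mp hx) hk) := by
    ext x
    simp [Finset.mem_attachFin]
  rw [he, Finset.card_attachFin, Finset.card_range]

/-- For Round Robin on speed-ordered unrelated machines (unit weights) and any `κ ≥ 1`,
the dual assignment `ā, b̄, c̄` is nonnegative and feasible for the dual LP with `α = κ`. -/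
theorem roundRobin_speed_ordered_unrelated_dual_feasible
    (m n : ℕ)
    (p : Fin n → ℝ) (r : Fin n → ℕ) (s : Fin m → Fin n → ℝ)
    (hp : ∀ j, 0 < p j) (hs : ∀ i j, 0 < s i j)
    -- speed-ordered unrelated machines: `s 1 j ≥ s 2 j ≥ … ≥ s m j` for every job `j`
    (hso : ∀ (j : Fin n) (i i' : Fin m), i ≤ i' → s i' j ≤ s i j)
    (κ : ℝ) (hκ : 1 ≤ κ)
    -- the algorithm's schedule: at every time `t`, every alive job receives rate
    -- `1/|J(t)|` on each of the `|J(t)|` fastest machines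
    (C : Fin n → ℕ)
    (A : ℕ → Finset (Fin n)) (hA : ∀ t, A t = univ.filter (fun j => r j ≤ t ∧ t ≤ C j))
    (y : Fin m → Fin n → ℕ → ℝ)
    (hy : ∀ i j t, y i j t =
      if j ∈ A t ∧ (i : ℕ) < (A t).card then ((A t).card : ℝ)⁻¹ else 0)
    (hC : CompletesAt p r s y C)
    -- unfinished jobs `U_t` and the median value `ζ_t`
    (U : ℕ → Finset (Fin n)) (hU : ∀ t, U t = univ.filter (fun j => t ≤ C j))
    (ζ : ℕ → ℝ)
    (hζ : ∀ t, ζ t = (Multiset.sort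
        ((U t).val.map (fun j => progress s y j t / p j)) (· ≤ ·)).getD ((U t).card / 2) 0)
    -- the values β, γ (machine indices are 1-based in `β`)
    (β : Fin m → ℕ → ℝ)
    (hβ : ∀ i t, β i t =
      if (i : ℕ) + 1 ≤ (A t).card then ((A t).card : ℝ) / ((i : ℕ) + 1) else 0)
    (γ : Fin n → ℕ → ℝ)
    (hγ : ∀ j t, γ j t = if j ∈ A t then 1 else 0)
    -- the dual assignment ā, b̄, c̄
    (abar : Fin n → ℝ)
    (habar : ∀ j, abar j = ∑ t' ∈ Finset.range (C j + 1),
      if progress s y j t' / p j ≤ ζ t' then (1 : ℝ) else 0)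
    (bbar : Fin m → ℕ → ℝ)
    (hbbar : ∀ i t, bbar i t = (1 / κ) * ∑' t' : ℕ, if t ≤ t' then β i t' * ζ t' else 0)
    (cbar : Fin n → ℕ → ℝ)
    (hcbar : ∀ j t, cbar j t = (1 / κ) * ∑' t' : ℕ, if t ≤ t' then γ j t' * ζ t' else 0) :
    ((∀ j, 0 ≤ abar j) ∧ (∀ i t, 0 ≤ bbar i t) ∧ (∀ j t, 0 ≤ cbar j t)) ∧
      (∀ i j (t : ℕ), r j ≤ t →
        abar j * s i j / p j - κ * bbar i t - κ * cbar j t ≤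
          (s i j * (t : ℝ)) / p j) := by
  have hκ0 : (0:ℝ) < κ := lt_of_lt_of_le one_pos hκ
  have hκne : κ ≠ 0 := ne_of_gt hκ0
  have hy0 : ∀ i j t, 0 ≤ y i j t := by
    intro i j t
    rw [hy]
    split
    · positivity
    · exact le_refl 0
  have hq0 : ∀ j t, 0 ≤ progress s y j t := by
    intro j t
    apply Finset.sum_nonneg
    intro i _
    exact mul_nonneg (hs i j).le (hy0 i j t)
  have hζ0 : ∀ t, 0 ≤ ζ t := by
    intro t
    rw [hζ]
    set L := Multiset.sort ((U t).val.map fun j => progress s y j t / p j) (· ≤ ·) with hL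
    have hmem : ∀ x ∈ L, (0:ℝ) ≤ x := by
      intro x hx
      rw [hL, Multiset.mem_sort] at hx
      obtain ⟨j, hj, rfl⟩ := Multiset.mem_map.mp hx
      exact div_nonneg (hq0 j t) (hp j).le
    rcases lt_or_ge ((U t).card / 2) L.length with h | h
    · rw [List.getD_eq_getElem L 0 h]
      exact hmem _ (L.getElem_mem h)
    · rw [List.getD_eq_default L 0 h]
  have hβ0 : ∀ i t, 0 ≤ β i t := by
    intro i t
    rw [hβ]
    split
    · positivity
    · exact le_refl 0
  have hγ0 : ∀ j t, 0 ≤ γ j t := by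
    intro j t
    rw [hγ]
    split <;> norm_num
  set N : ℕ := Finset.univ.sup C with hN
  have hAe : ∀ t', N < t' → A t' = ∅ := by
    intro t' ht'
    rw [hA, Finset.filter_eq_empty_iff]
    intro j _
    push_neg
    intro _
    have hCj : C j ≤ N := Finset.le_sup (Finset.mem_univ j)
    omega
  constructor
  · refine ⟨?_, ?_, ?_⟩
    · intro j
      rw [habar]
      apply Finset.sum_nonneg
      intro x _
      split <;> norm_num
    · intro i t
      rw [hbbar]
      refine mul_nonneg (div_nonneg zero_le_one hκ0.le) (tsum_nonneg ?_)
      intro t'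
      split
      · exact mul_nonneg (hβ0 _ _) (hζ0 _)
      · exact le_refl 0
    · intro j t
      rw [hcbar]
      refine mul_nonneg (div_nonneg zero_le_one hκ0.le) (tsum_nonneg ?_)
      intro t'
      split
      · exact mul_nonneg (hγ0 _ _) (hζ0 _)
      · exact le_refl 0
  · intro i j t hrt
    have hP : 0 < p j := hp j
    -- the tail sums are honest sums
    have hbb : κ * bbar i t = ∑' t' : ℕ, (if t ≤ t' then β i t' * ζ t' else 0) := by
      rw [hbbar, ← mul_assoc, mul_one_div, div_self hκne, one_mul]
    have hcc : κ * cbar j t = ∑' t' : ℕ, (if t ≤ t' then γ j t' * ζ t' else 0) := by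
      rw [hcbar, ← mul_assoc, mul_one_div, div_self hκne, one_mul]
    have hfsum : Summable (fun t' : ℕ => if t ≤ t' then β i t' * ζ t' else 0) := by
      apply summable_of_ne_finset_zero (s := Finset.range (N + 1))
      intro b hb
      have hNb : N < b := by
        simp only [Finset.mem_range] at hb
        omega
      have hβb : β i b = 0 := by
        rw [hβ, hAe b hNb]
        simp
      simp [hβb]
    have hgsum : Summable (fun t' : ℕ => if t ≤ t' then γ j t' * ζ t' else 0) := by
      apply summable_of_ne_finset_zero (s := Finset.range (N + 1))
      intro b hb
      have hNb : N < b := by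
        simp only [Finset.mem_range] at hb
        omega
      have hγb : γ j b = 0 := by
        rw [hγ, hAe b hNb]
        simp
      simp [hγb]
    have hsumf : ∑ t' ∈ Finset.Icc t (C j), (if t ≤ t' then β i t' * ζ t' else 0)
        ≤ ∑' t' : ℕ, (if t ≤ t' then β i t' * ζ t' else 0) := by
      apply Summable.sum_le_tsum _ _ hfsum
      intro x _
      split
      · exact mul_nonneg (hβ0 _ _) (hζ0 _)
      · exact le_refl 0
    have hsumg : ∑ t' ∈ Finset.Icc t (C j), (if t ≤ t' then γ j t' * ζ t' else 0)
        ≤ ∑' t' : ℕ, (if t ≤ t' then γ j t' * ζ t' else 0) := by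
      apply Summable.sum_le_tsum _ _ hgsum
      intro x _
      split
      · exact mul_nonneg (hγ0 _ _) (hζ0 _)
      · exact le_refl 0
    -- key pointwise bound on [t, C j]
    have key : ∀ t' ∈ Finset.Icc t (C j),
        (if progress s y j t' / p j ≤ ζ t' then (1:ℝ) else 0) * (s i j / p j)
          ≤ (if t ≤ t' then β i t' * ζ t' else 0) + (if t ≤ t' then γ j t' * ζ t' else 0) := by
      intro t' ht'
      obtain ⟨htt', htC⟩ := Finset.mem_Icc.mp ht'
      rw [if_pos htt', if_pos htt']
      have hjA : j ∈ A t' := by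
        rw [hA]
        exact Finset.mem_filter.mpr ⟨Finset.mem_univ j, le_trans hrt htt', htC⟩
      have hγ1 : γ j t' = 1 := by rw [hγ, if_pos hjA]
      set k := (A t').card with hk
      have hk1 : 1 ≤ k := Finset.card_pos.mpr ⟨j, hjA⟩
      have hK1 : (1:ℝ) ≤ (k:ℝ) := by exact_mod_cast hk1
      have hK0 : (0:ℝ) < (k:ℝ) := lt_of_lt_of_le one_pos hK1
      have hqF : progress s y j t' = ((k:ℝ))⁻¹ *
          ∑ i' ∈ Finset.univ.filter (fun i' : Fin m => (i' : ℕ) < k), s i' j := by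
        simp only [progress, hy, hjA, true_and]
        rw [← hk, Finset.mul_sum, Finset.sum_filter]
        apply Finset.sum_congr rfl
        intro i' _
        by_cases h : (i' : ℕ) < k
        · simp [h, mul_comm]
        · simp [h]
      by_cases hind : progress s y j t' / p j ≤ ζ t'
      · rw [if_pos hind, one_mul, hγ1, one_mul]
        have hqζ : progress s y j t' ≤ ζ t' * p j := (div_le_iff₀ hP).mp hind
        by_cases hik : (i : ℕ) + 1 ≤ k
        · -- machine i is among the k fastest
          have hβv : β i t' = (k:ℝ) / ((i:ℕ) + 1) := by
            rw [hβ, ← hk, if_pos hik]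
          have hcard : (Finset.univ.filter (fun i' : Fin m => (i' : ℕ) < (i:ℕ) + 1)).card
              = (i:ℕ) + 1 := card_filter_fin_lt m ((i:ℕ) + 1) i.isLt
          have h1 : ∀ i' ∈ Finset.univ.filter (fun i' : Fin m => (i' : ℕ) < (i:ℕ) + 1),
              s i j ≤ s i' j := by
            intro i' hi'
            simp only [Finset.mem_filter, Finset.mem_univ, true_and] at hi'
            exact hso j i' i (Fin.le_def.mpr (by omega))
          have h2 := Finset.card_nsmul_le_sum _ _ _ h1
          rw [hcard, nsmul_eq_mul] at h2
          push_cast at h2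
          have hsub : Finset.univ.filter (fun i' : Fin m => (i' : ℕ) < (i:ℕ) + 1)
              ⊆ Finset.univ.filter (fun i' : Fin m => (i' : ℕ) < k) := by
            intro x hx
            simp only [Finset.mem_filter, Finset.mem_univ, true_and] at hx ⊢
            omega
          have hsumFG := Finset.sum_le_sum_of_subset_of_nonneg hsub
            (fun x _ _ => (hs x j).le)
          have hqlb : ((i:ℕ) + 1 : ℝ) * s i j ≤ (k:ℝ) * progress s y j t' := by
            rw [hqF, ← mul_assoc, mul_inv_cancel₀ (ne_of_gt hK0), one_mul]
            exact le_trans h2 hsumFG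
          have hI0 : (0:ℝ) < ((i:ℕ) : ℝ) + 1 := by positivity
          have h3 : ((i:ℕ) + 1 : ℝ) * s i j ≤ (k:ℝ) * (ζ t' * p j) :=
            le_trans hqlb (mul_le_mul_of_nonneg_left hqζ hK0.le)
          have h4 : (k:ℝ) / ((i:ℕ) + 1) * ζ t' * p j
              = ((k:ℝ) * (ζ t' * p j)) / ((i:ℕ) + 1) := by ring
          have h5 : s i j ≤ (k:ℝ) / ((i:ℕ) + 1) * ζ t' * p j := by
            rw [h4, le_div_iff₀ hI0]
            linarith
          rw [hβv, div_le_iff₀ hP]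
          calc s i j ≤ (k:ℝ) / ((i:ℕ) + 1) * ζ t' * p j := h5
            _ ≤ ((k:ℝ) / ((i:ℕ) + 1) * ζ t' + ζ t') * p j :=
                mul_le_mul_of_nonneg_right (le_add_of_nonneg_right (hζ0 t')) hP.le
        · -- machine i is slower than the k fastest
          have hβv : β i t' = 0 := by rw [hβ, ← hk, if_neg hik]
          have hki : k ≤ (i : ℕ) := by omega
          have hkm : k ≤ m := le_trans hki (le_of_lt i.isLt)
          have hcardF : (Finset.univ.filter (fun i' : Fin m => (i' : ℕ) < k)).card = k :=
            card_filter_fin_lt m k hkm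
          have h1 : ∀ i' ∈ Finset.univ.filter (fun i' : Fin m => (i' : ℕ) < k),
              s i j ≤ s i' j := by
            intro i' hi'
            simp only [Finset.mem_filter, Finset.mem_univ, true_and] at hi'
            exact hso j i' i (Fin.le_def.mpr (by omega))
          have h2 := Finset.card_nsmul_le_sum _ _ _ h1
          rw [hcardF, nsmul_eq_mul] at h2
          have hqlb : s i j ≤ progress s y j t' := by
            rw [hqF]
            calc s i j = (k:ℝ)⁻¹ * ((k:ℝ) * s i j) := by
                  rw [← mul_assoc, inv_mul_cancel₀ (ne_of_gt hK0), one_mul]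
              _ ≤ (k:ℝ)⁻¹ * ∑ i' ∈ Finset.univ.filter (fun i' : Fin m => (i' : ℕ) < k), s i' j :=
                  mul_le_mul_of_nonneg_left h2 (inv_nonneg.mpr hK0.le)
          have h3 : s i j / p j ≤ progress s y j t' / p j := by gcongr
          rw [hβv, zero_mul, zero_add]
          exact le_trans h3 hind
      · rw [if_neg hind, zero_mul]
        exact add_nonneg (mul_nonneg (hβ0 i t') (hζ0 t')) (mul_nonneg (hγ0 j t') (hζ0 t'))
    -- assemble
    have habar_sum : abar j * s i j / p j
        = ∑ t' ∈ Finset.range (C j + 1),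
            (if progress s y j t' / p j ≤ ζ t' then (1:ℝ) else 0) * (s i j / p j) := by
      rw [habar, Finset.sum_mul, Finset.sum_div]
      apply Finset.sum_congr rfl
      intro x _
      rw [mul_div_assoc]
    have hIccEq : (Finset.range (C j + 1)).filter (fun t' => ¬ t' < t) = Finset.Icc t (C j) := by
      ext x
      simp only [Finset.mem_filter, Finset.mem_range, Finset.mem_Icc, Nat.lt_succ_iff, not_lt]
      omega
    have hsplit := Finset.sum_filter_add_sum_filter_not (Finset.range (C j + 1))
      (fun t' => t' < t)
      (fun t' => (if progress s y j t' / p j ≤ ζ t' then (1:ℝ) else 0) * (s i j / p j))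
    rw [hIccEq] at hsplit
    have hc : 0 ≤ s i j / p j := div_nonneg (hs i j).le hP.le
    have hb1 : ∑ t' ∈ (Finset.range (C j + 1)).filter (fun t' => t' < t),
        (if progress s y j t' / p j ≤ ζ t' then (1:ℝ) else 0) * (s i j / p j)
        ≤ (t:ℝ) * (s i j / p j) := by
      have hbo := Finset.sum_le_card_nsmul
        ((Finset.range (C j + 1)).filter (fun t' => t' < t))
        (fun t' => (if progress s y j t' / p j ≤ ζ t' then (1:ℝ) else 0) * (s i j / p j))
        (s i j / p j) (by
          intro x _
          split
          · simp
          · simp [hc])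
      have hcard : ((Finset.range (C j + 1)).filter (fun t' => t' < t)).card ≤ t := by
        calc ((Finset.range (C j + 1)).filter (fun t' => t' < t)).card
            ≤ (Finset.range t).card := by
              apply Finset.card_le_card
              intro x hx
              simp only [Finset.mem_filter, Finset.mem_range] at hx
              simp only [Finset.mem_range]
              exact hx.2
          _ = t := Finset.card_range t
      calc ∑ t' ∈ (Finset.range (C j + 1)).filter (fun t' => t' < t),
            (if progress s y j t' / p j ≤ ζ t' then (1:ℝ) else 0) * (s i j / p j)
          ≤ ((Finset.range (C j + 1)).filter (fun t' => t' < t)).card • (s i j / p j) := hbo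
        _ = (((Finset.range (C j + 1)).filter (fun t' => t' < t)).card : ℝ) * (s i j / p j) :=
            nsmul_eq_mul _ _
        _ ≤ (t:ℝ) * (s i j / p j) :=
            mul_le_mul_of_nonneg_right (by exact_mod_cast hcard) hc
    have hb2 := Finset.sum_le_sum key
    have hfin : ∑ t' ∈ Finset.Icc t (C j),
        ((if t ≤ t' then β i t' * ζ t' else 0) + (if t ≤ t' then γ j t' * ζ t' else 0))
        = (∑ t' ∈ Finset.Icc t (C j), (if t ≤ t' then β i t' * ζ t' else 0))
          + ∑ t' ∈ Finset.Icc t (C j), (if t ≤ t' then γ j t' * ζ t' else 0) :=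
      Finset.sum_add_distrib
    have hts : s i j * (t:ℝ) / p j = (t:ℝ) * (s i j / p j) := by ring
    linarith [habar_sum, hsplit, hb1, hb2, hfin, hsumf, hsumg, hbb, hcc, hts]
end
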